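/- Let V and W be finite-dimensional real inner product spaces and B : V × V → W a bilinear alternating map. Let N = V × W with product (v,w)·(v',w') = (v+v', w+w' + ½B(v,v')). Let s be a linear subspace of W, W' = s^⊥, π : W → W' the orthogonal projection, and N' = V × W' with product (v,w')·(v',w'') = (v+v', w'+w'' + ½π(B(v,v'))). For F ∈ S(V × W) define (R^s F)(v,w') = ∫_s F(v, w' + σ) dσ. For v₀ ∈ V define the left-invariant vector field X_{v₀} on N by (X_{v₀}F)(v,w) = d/dτ|_{τ=0} F((v,w)·(τ v₀, 0)), and define X'_{v₀} on N' analogously. For w₀ ∈ W define (∂_{w₀}F)(v,w) = d/dτ|_{τ=0} F(v, w + τ w₀). Then for every F ∈ S(V × W): (1) R^s(X_{v₀}F) = X'_{v₀}(R^s F) for every v₀ ∈ V; (2) R^s(∂_{w₀}F) = ∂_{w₀}(R^s F) for every w₀ ∈ W'; (3) R^s(∂_{w₀}F) = 0 for every w₀ ∈ s. -/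

import Mathlib

open MeasureTheory

/-- The product of the two-step nilpotent group `V × W` attached to the bilinear
alternating map `B`. -/
noncomputable def nilMul {V W : Type*} [AddCommGroup V] [Module ℝ V] [AddCommGroup W] [Module ℝ W]
    (B : V →ₗ[ℝ] V →ₗ[ℝ] W) (p q : V × W) : V × W :=
  (p.1 + q.1, p.2 + q.2 + (2⁻¹ : ℝ) • B p.1 q.1)

/-- The left-invariant vector field `X_{v₀}`:
`(X_{v₀}F)(p) = d/dτ|₀ F(p·(τv₀,0))`. -/
noncomputable def leftVF {V W : Type*}
    [NormedAddCommGroup V] [NormedSpace ℝ V] [NormedAddCommGroup W] [NormedSpace ℝ W]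
    (B : V →ₗ[ℝ] V →ₗ[ℝ] W) (v₀ : V) (F : V × W → ℂ) : V × W → ℂ :=
  fun p => deriv (fun τ : ℝ => F (nilMul B p (τ • v₀, 0))) 0

/-- The central derivative `∂_{w₀}`: `(∂_{w₀}F)(p) = d/dτ|₀ F(p.1, p.2 + τw₀)`. -/
noncomputable def centDeriv {V W : Type*}
    [NormedAddCommGroup V] [NormedSpace ℝ V] [NormedAddCommGroup W] [NormedSpace ℝ W]
    (w₀ : W) (F : V × W → ℂ) : V × W → ℂ :=
  fun p => deriv (fun τ : ℝ => F (p.1, p.2 + τ • w₀)) 0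

/-- The transform `R^s F (v,w') = ∫_s F(v, w'+σ) dσ`. -/
noncomputable def radonS {V W : Type*}
    [NormedAddCommGroup V] [NormedSpace ℝ V]
    [NormedAddCommGroup W] [InnerProductSpace ℝ W]
    (s : Submodule ℝ W) [MeasureSpace s]
    (F : V × W → ℂ) : V × ↥sᗮ → ℂ :=
  fun p => ∫ σ : s, F (p.1, (p.2 : W) + (σ : W))

/-! ### Auxiliary lemmas -/

/-- Polynomial decay for Schwartz maps, in a convenient form. -/
lemma schwartz_decay_aux {E F' : Type*} [NormedAddCommGroup E] [NormedSpace ℝ E]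
    [NormedAddCommGroup F'] [NormedSpace ℝ F'] (G : SchwartzMap E F') (k : ℕ) :
    ∃ C : ℝ, 0 ≤ C ∧ ∀ x : E, ‖G x‖ ≤ C * ((1 + ‖x‖) ^ k)⁻¹ := by
  have h := fun x : E => SchwartzMap.one_add_le_sup_seminorm_apply (𝕜 := ℝ)
    (m := (k, 0)) (k := k) (n := 0) le_rfl le_rfl G x
  refine ⟨2 ^ k * (Finset.Iic ((k, 0) : ℕ × ℕ)).sup
    (fun m => SchwartzMap.seminorm ℝ m.1 m.2) G, by positivity, fun x => ?_⟩
  have hx : (0:ℝ) < (1 + ‖x‖) ^ k := by positivity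
  have hGx := h x
  rw [norm_iteratedFDeriv_zero] at hGx
  rw [← div_eq_mul_inv, le_div_iff₀ hx]
  nlinarith [hGx]

section Main

variable {V W : Type*}
    [NormedAddCommGroup V] [InnerProductSpace ℝ V] [FiniteDimensional ℝ V]
    [MeasurableSpace V] [BorelSpace V]
    [NormedAddCommGroup W] [InnerProductSpace ℝ W] [FiniteDimensional ℝ W]
    [MeasurableSpace W] [BorelSpace W]

/-- The straight curve `τ ↦ (v + τa, w + τb)` and its derivative. -/
lemma curve_hasDerivAt (v a : V) (w b : W) (τ : ℝ) :
    HasDerivAt (fun τ : ℝ => ((v + τ • a, w + τ • b) : V × W)) (a, b) τ := by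
  apply HasDerivAt.prodMk
  · simpa using ((hasDerivAt_id τ).smul_const a).const_add v
  · simpa using ((hasDerivAt_id τ).smul_const b).const_add w

lemma schwartz_curve_deriv (F : SchwartzMap (V × W) ℂ) (v a : V) (w b : W) (τ : ℝ) :
    HasDerivAt (fun τ : ℝ => F (v + τ • a, w + τ • b))
      (fderiv ℝ F (v + τ • a, w + τ • b) (a, b)) τ :=
  (F.differentiableAt.hasFDerivAt).comp_hasDerivAt τ (curve_hasDerivAt v a w b τ)

lemma schwartz_curve_deriv' (F : SchwartzMap (V × W) ℂ) (v a : V) (w b σ : W) (τ : ℝ) :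
    HasDerivAt (fun τ : ℝ => F (v + τ • a, w + τ • b + σ))
      (fderiv ℝ F (v + τ • a, w + τ • b + σ) (a, b)) τ := by
  have hc : HasDerivAt (fun τ : ℝ => ((v + τ • a, w + τ • b + σ) : V × W)) (a, b) τ := by
    apply HasDerivAt.prodMk
    · simpa using ((hasDerivAt_id τ).smul_const a).const_add v
    · have h := (((hasDerivAt_id τ).smul_const b).const_add w).add_const σ
      simpa using h
  exact (F.differentiableAt.hasFDerivAt).comp_hasDerivAt τ hc

/-- Pointwise description of `leftVF` for Schwartz functions. -/
lemma leftVF_eq (B : V →ₗ[ℝ] V →ₗ[ℝ] W) (F : SchwartzMap (V × W) ℂ) (v₀ : V) (p : V × W) :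
    leftVF B v₀ (⇑F) p = fderiv ℝ F p (v₀, (2⁻¹ : ℝ) • B p.1 v₀) := by
  have h := schwartz_curve_deriv F p.1 v₀ p.2 ((2⁻¹ : ℝ) • B p.1 v₀) 0
  simp only [zero_smul, add_zero, Prod.mk.eta] at h
  have heq : (fun τ : ℝ => F (nilMul B p (τ • v₀, 0))) =
      fun τ : ℝ => F (p.1 + τ • v₀, p.2 + τ • ((2⁻¹ : ℝ) • B p.1 v₀)) := by
    funext τ
    simp only [nilMul, add_zero]
    rw [(B p.1).map_smul, smul_comm]
  rw [leftVF, heq]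
  exact h.deriv

/-- Pointwise description of `centDeriv` for Schwartz functions. -/
lemma centDeriv_eq (F : SchwartzMap (V × W) ℂ) (w₀ : W) (p : V × W) :
    centDeriv w₀ (⇑F) p = fderiv ℝ F p ((0 : V), w₀) := by
  have hc : HasDerivAt (fun τ : ℝ => ((p.1, p.2 + τ • w₀) : V × W)) ((0 : V), w₀) 0 := by
    apply HasDerivAt.prodMk (hasDerivAt_const _ _)
    simpa using ((hasDerivAt_id (0:ℝ)).smul_const w₀).const_add p.2
  have h := (F.differentiableAt.hasFDerivAt).comp_hasDerivAt 0 hc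
  simp only [zero_smul, add_zero, Prod.mk.eta] at h
  exact h.deriv

/-- The key lemma: differentiation under the integral sign for the transform `R^s`. -/
lemma key (s : Submodule ℝ W) [MeasurableSpace s] [BorelSpace s]
    (F : SchwartzMap (V × W) ℂ) (v a : V) (w b : W) :
    Integrable (fun σ : s => fderiv ℝ F (v, w + σ) (a, b)) ∧
    HasDerivAt (fun τ : ℝ => ∫ σ : s, F (v + τ • a, w + τ • b + σ))
      (∫ σ : s, fderiv ℝ F (v, w + σ) (a, b)) 0 := by
  classical
  obtain ⟨k, hk⟩ : ∃ k : ℕ, k = Module.finrank ℝ s + 1 := ⟨_, rfl⟩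
  obtain ⟨C₁, hC₁0, hC₁⟩ := schwartz_decay_aux F k
  obtain ⟨C₂, hC₂0, hC₂⟩ := schwartz_decay_aux (SchwartzMap.fderivCLM ℝ (V × W) ℂ F) k
  obtain ⟨M, hM⟩ : ∃ M : ℝ, M = ‖v‖ + ‖a‖ + ‖w‖ + ‖b‖ := ⟨_, rfl⟩
  have hM0 : 0 ≤ M := by rw [hM]; positivity
  -- geometric estimate
  have hgeo : ∀ τ : ℝ, |τ| ≤ 1 → ∀ σ : s,
      (1 + ‖σ‖) ≤ (1 + M) * (1 + ‖((v + τ • a, w + τ • b + ↑σ) : V × W)‖) := by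
    intro τ hτ σ
    have h2 : ‖w + τ • b + (σ:W)‖ ≤ ‖((v + τ • a, w + τ • b + (σ:W)) : V × W)‖ :=
      norm_snd_le ((v + τ • a, w + τ • b + (σ:W)) : V × W)
    have h3 : ‖τ • b‖ ≤ ‖b‖ := by
      rw [norm_smul, Real.norm_eq_abs]
      nlinarith [norm_nonneg b, abs_nonneg τ]
    have h4 : ‖(σ:W)‖ ≤ ‖w + τ • b + (σ:W)‖ + ‖w + τ • b‖ := by
      simpa [add_sub_cancel_left] using norm_sub_le (w + τ • b + (σ:W)) (w + τ • b)
    have h5 : ‖w + τ • b‖ ≤ ‖w‖ + ‖τ • b‖ := norm_add_le _ _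
    have h6 : ‖σ‖ = ‖(σ:W)‖ := rfl
    have hn := norm_nonneg ((v + τ • a, w + τ • b + (σ:W)) : V × W)
    have hv := norm_nonneg v
    have ha := norm_nonneg a
    rw [h6, hM]
    nlinarith [norm_nonneg w, norm_nonneg b]
  -- integrable bound
  have hibound : Integrable (fun σ : s => ((1 + ‖σ‖) ^ k)⁻¹) := by
    have h := integrable_one_add_norm (E := s) (μ := volume) (r := (k : ℝ))
      (by rw [hk]; exact_mod_cast Nat.lt_succ_self _)
    have heq : (fun σ : s => ((1:ℝ) + ‖σ‖) ^ (-(k:ℝ))) =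
        fun σ : s => ((1 + ‖σ‖) ^ k)⁻¹ := by
      funext σ
      rw [Real.rpow_neg (by positivity), Real.rpow_natCast]
    rwa [heq] at h
  -- the derivative bound
  have hineq : ∀ τ : ℝ, |τ| ≤ 1 → ∀ σ : s,
      ‖fderiv ℝ F ((v + τ • a, w + τ • b + σ) : V × W) (a, b)‖ ≤
        (C₂ * (1 + M) ^ k * ‖((a, b) : V × W)‖) * ((1 + ‖σ‖) ^ k)⁻¹ := by
    intro τ hτ σ
    set x : V × W := (v + τ • a, w + τ • b + σ) with hx
    have h2 : ‖fderiv ℝ F x‖ ≤ C₂ * ((1 + ‖x‖) ^ k)⁻¹ := by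
      have := hC₂ x; rwa [SchwartzMap.fderivCLM_apply] at this
    have hg := hgeo τ hτ σ
    have h5 : (1 + ‖σ‖) ^ k / (1 + M) ^ k ≤ (1 + ‖x‖) ^ k := by
      rw [div_le_iff₀ (by positivity)]
      calc (1 + ‖σ‖) ^ k ≤ ((1 + M) * (1 + ‖x‖)) ^ k :=
            pow_le_pow_left₀ (by positivity) hg k
        _ = (1 + ‖x‖) ^ k * (1 + M) ^ k := by rw [mul_pow, mul_comm]
    have h6 : ((1 + ‖x‖) ^ k)⁻¹ ≤ (1 + M) ^ k * ((1 + ‖σ‖) ^ k)⁻¹ := by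
      have := inv_anti₀ (by positivity) h5
      rwa [inv_div, div_eq_mul_inv] at this
    calc ‖fderiv ℝ F x (a, b)‖ ≤ ‖fderiv ℝ F x‖ * ‖((a, b) : V × W)‖ :=
          ContinuousLinearMap.le_opNorm _ _
      _ ≤ (C₂ * ((1 + M) ^ k * ((1 + ‖σ‖) ^ k)⁻¹)) * ‖((a, b) : V × W)‖ := by
          apply mul_le_mul_of_nonneg_right _ (norm_nonneg _)
          exact h2.trans (mul_le_mul_of_nonneg_left h6 hC₂0)
      _ = (C₂ * (1 + M) ^ k * ‖((a, b) : V × W)‖) * ((1 + ‖σ‖) ^ k)⁻¹ := by ring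
  -- continuity facts
  have hcurve : ∀ τ : ℝ, Continuous (fun σ : s => ((v + τ • a, w + τ • b + ↑σ) : V × W)) := by
    intro τ
    exact (continuous_const.prodMk (continuous_const.add continuous_subtype_val))
  have hfd_cont : Continuous (fderiv ℝ F) :=
    (F.smooth ⊤).continuous_fderiv (by simp)
  have hFmeas : ∀ τ : ℝ, AEStronglyMeasurable
      (fun σ : s => F ((v + τ • a, w + τ • b + ↑σ) : V × W)) volume :=
    fun τ => (F.continuous.comp (hcurve τ)).aestronglyMeasurable
  have hF'meas : AEStronglyMeasurable
      (fun σ : s => fderiv ℝ F ((v + (0:ℝ) • a, w + (0:ℝ) • b + ↑σ) : V × W) (a, b)) volume := by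
    have hc : Continuous fun σ : s => fderiv ℝ (⇑F) ((v + (0:ℝ) • a, w + (0:ℝ) • b + ↑σ) : V × W) :=
      hfd_cont.comp (hcurve 0)
    exact (hc.clm_apply continuous_const).aestronglyMeasurable
  -- integrability of F at τ = 0
  have hFint : Integrable (fun σ : s => F ((v + (0:ℝ) • a, w + (0:ℝ) • b + ↑σ) : V × W)) volume := by
    apply Integrable.mono' (g := fun σ : s => (C₁ * (1 + M) ^ k) * ((1 + ‖σ‖) ^ k)⁻¹)
      (hibound.const_mul _) (hFmeas 0)
    filter_upwards with σ
    set x : V × W := (v + (0:ℝ) • a, w + (0:ℝ) • b + σ) with hx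
    have hg := hgeo 0 (by simp) σ
    have h5 : (1 + ‖σ‖) ^ k / (1 + M) ^ k ≤ (1 + ‖x‖) ^ k := by
      rw [div_le_iff₀ (by positivity)]
      calc (1 + ‖σ‖) ^ k ≤ ((1 + M) * (1 + ‖x‖)) ^ k :=
            pow_le_pow_left₀ (by positivity) hg k
        _ = (1 + ‖x‖) ^ k * (1 + M) ^ k := by rw [mul_pow, mul_comm]
    have h6 : ((1 + ‖x‖) ^ k)⁻¹ ≤ (1 + M) ^ k * ((1 + ‖σ‖) ^ k)⁻¹ := by
      have := inv_anti₀ (by positivity) h5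
      rwa [inv_div, div_eq_mul_inv] at this
    calc ‖F x‖ ≤ C₁ * ((1 + ‖x‖) ^ k)⁻¹ := hC₁ x
      _ ≤ C₁ * ((1 + M) ^ k * ((1 + ‖σ‖) ^ k)⁻¹) := mul_le_mul_of_nonneg_left h6 hC₁0
      _ = (C₁ * (1 + M) ^ k) * ((1 + ‖σ‖) ^ k)⁻¹ := by ring
  -- apply the dominated differentiation theorem
  have main := hasDerivAt_integral_of_dominated_loc_of_deriv_le
    (F := fun τ : ℝ => fun σ : s => F ((v + τ • a, w + τ • b + ↑σ) : V × W))
    (F' := fun τ : ℝ => fun σ : s => fderiv ℝ F ((v + τ • a, w + τ • b + ↑σ) : V × W) (a, b))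
    (x₀ := (0:ℝ)) (μ := volume)
    (bound := fun σ : s => (C₂ * (1 + M) ^ k * ‖((a, b) : V × W)‖) * ((1 + ‖σ‖) ^ k)⁻¹)
    (s := Metric.ball (0:ℝ) 1) (Metric.ball_mem_nhds _ one_pos)
    (Filter.Eventually.of_forall hFmeas) hFint hF'meas
    (Filter.Eventually.of_forall fun σ τ hτ => by
      apply hineq τ _ σ
      have := Metric.mem_ball.mp hτ
      simpa [Real.dist_eq] using this.le)
    (hibound.const_mul _)
    (Filter.Eventually.of_forall fun σ τ _ => schwartz_curve_deriv' F v a w b (↑σ) τ)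
  -- massage the conclusion
  have hsimp : ∀ σ : s, ((v + (0:ℝ) • a, w + (0:ℝ) • b + ↑σ) : V × W) = (v, w + ↑σ) := by
    intro σ; simp
  constructor
  · have := main.1
    simpa only [hsimp] using this
  · have := main.2
    simpa only [hsimp] using this

/-- Translation invariance of the integral over `s`. -/
lemma trans_inv (s : Submodule ℝ W) [MeasurableSpace s] [BorelSpace s]
    (F : SchwartzMap (V × W) ℂ) (v : V) (w : W) (ζ : s) :
    ∫ σ : s, F (v, w + ↑ζ + ↑σ) = ∫ σ : s, F (v, w + ↑σ) := by
  have h := integral_add_left_eq_self (μ := (volume : Measure s))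
    (f := fun σ : s => F (v, w + ↑σ)) ζ
  calc ∫ σ : s, F (v, w + ↑ζ + ↑σ) = ∫ σ : s, F (v, w + ↑(ζ + σ)) := by
        congr 1; funext σ; rw [Submodule.coe_add, ← add_assoc]
    _ = ∫ σ : s, F (v, w + ↑σ) := h

/-- The integral over `s` of a derivative in a direction lying in `s` vanishes. -/
lemma int_deriv_zero (s : Submodule ℝ W) [MeasurableSpace s] [BorelSpace s]
    (F : SchwartzMap (V × W) ℂ) (v : V) (w : W) (d : W) (hd : d ∈ s) :
    ∫ σ : s, fderiv ℝ F (v, w + σ) ((0 : V), d) = 0 := by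
  have h := (key s F v 0 w d).2
  have hconst : (fun τ : ℝ => ∫ σ : s, F (v + τ • (0:V), w + τ • d + σ)) =
      fun _ : ℝ => ∫ σ : s, F (v, w + ↑σ) := by
    funext τ
    have : ∫ σ : s, F (v + τ • (0:V), w + τ • d + σ) =
        ∫ σ : s, F (v, w + ↑(⟨τ • d, s.smul_mem τ hd⟩ : s) + ↑σ) := by
      congr 1; funext σ; simp
    rw [this, trans_inv]
  rw [hconst] at h
  exact h.unique (hasDerivAt_const 0 _)

end Main

theorem stmt9
    {V W : Type*}
    [NormedAddCommGroup V] [InnerProductSpace ℝ V] [FiniteDimensional ℝ V]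
    [MeasurableSpace V] [BorelSpace V]
    [NormedAddCommGroup W] [InnerProductSpace ℝ W] [FiniteDimensional ℝ W]
    [MeasurableSpace W] [BorelSpace W]
    (B : V →ₗ[ℝ] V →ₗ[ℝ] W) (hB : ∀ v : V, B v v = 0)
    (s : Submodule ℝ W) [MeasurableSpace s] [BorelSpace s]
    (F : SchwartzMap (V × W) ℂ) :
    -- (1) R^s intertwines the left-invariant vector fields X_{v₀} and X'_{v₀}
    (∀ v₀ : V, ∀ p : V × ↥sᗮ,
      radonS s (leftVF B v₀ (⇑F)) p =
        leftVF (B.compr₂ ((Submodule.orthogonalProjectionOnto sᗮ : W →L[ℝ] ↥sᗮ) : W →ₗ[ℝ] ↥sᗮ)) v₀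
          (radonS s (⇑F)) p) ∧
    -- (2) R^s intertwines ∂_{w₀} for w₀ ∈ W'
    (∀ w₀ : ↥sᗮ, ∀ p : V × ↥sᗮ,
      radonS s (centDeriv ((w₀ : W)) (⇑F)) p = centDeriv w₀ (radonS s (⇑F)) p) ∧
    -- (3) R^s kills ∂_{w₀} for w₀ ∈ s
    (∀ w₀ ∈ s, ∀ p : V × ↥sᗮ, radonS s (centDeriv w₀ (⇑F)) p = 0) := by
  refine ⟨?_, ?_, ?_⟩
  · -- part (1)
    intro v₀ p
    obtain ⟨v, w'⟩ := p
    -- the RHS via the key lemma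
    set c : W := (2⁻¹ : ℝ) • B v v₀ with hc
    set q : ↥sᗮ := Submodule.orthogonalProjectionOnto sᗮ (B v v₀) with hq
    set b : W := (2⁻¹ : ℝ) • (q : W) with hb
    have hrhs : leftVF (B.compr₂ ((Submodule.orthogonalProjectionOnto sᗮ : W →L[ℝ] ↥sᗮ) : W →ₗ[ℝ] ↥sᗮ)) v₀
        (radonS s (⇑F)) (v, w') = ∫ σ : s, fderiv ℝ F (v, ↑w' + σ) (v₀, b) := by
      have h := (key s F v v₀ (↑w') b).2
      have heq : (fun τ : ℝ => ∫ σ : s, F (v + τ • v₀, (↑w' : W) + τ • b + σ)) =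
          fun τ : ℝ => radonS s (⇑F)
            (nilMul (B.compr₂ ((Submodule.orthogonalProjectionOnto sᗮ : W →L[ℝ] ↥sᗮ) : W →ₗ[ℝ] ↥sᗮ))
              (v, w') (τ • v₀, 0)) := by
        funext τ
        rw [radonS]
        congr 1
        funext σ
        have h1 : ((Submodule.orthogonalProjectionOnto sᗮ) ((B v) (τ • v₀))) = τ • q := by
          rw [(B v).map_smul, hq, (Submodule.orthogonalProjectionOnto sᗮ).map_smul]
        simp only [nilMul, LinearMap.compr₂_apply, ContinuousLinearMap.coe_coe, add_zero, h1,
          Submodule.coe_add, Submodule.coe_smul, hb]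
        rw [smul_comm (2⁻¹ : ℝ) τ]
      rw [heq] at h
      rw [leftVF]
      exact h.deriv
    -- the LHS
    have hlhs : radonS s (leftVF B v₀ (⇑F)) (v, w') =
        ∫ σ : s, fderiv ℝ F (v, ↑w' + σ) (v₀, c) := by
      simp only [radonS]
      congr 1
      funext σ
      rw [leftVF_eq]
    rw [hlhs, hrhs]
    -- compare the two integrals
    have hmem : c - b ∈ s := by
      have h1 : B v v₀ - ↑q ∈ (sᗮ)ᗮ := Submodule.sub_starProjection_mem_orthogonal (K := sᗮ) _
      rw [Submodule.orthogonal_orthogonal] at h1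
      have : c - b = (2⁻¹ : ℝ) • (B v v₀ - ↑q) := by rw [hc, hb, smul_sub]
      rw [this]
      exact s.smul_mem _ h1
    have hzero := int_deriv_zero s F v (↑w') (c - b) hmem
    have hint1 := (key s F v v₀ (↑w') b).1
    have hint2 := (key s F v 0 (↑w') (c - b)).1
    have hsplit : ∀ σ : s, fderiv ℝ F (v, ↑w' + σ) (v₀, c) =
        fderiv ℝ F (v, ↑w' + σ) (v₀, b) + fderiv ℝ F (v, ↑w' + σ) ((0 : V), c - b) := by
      intro σ
      rw [← map_add]
      congr 1
      simp [Prod.ext_iff]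
    calc ∫ σ : s, fderiv ℝ F (v, ↑w' + σ) (v₀, c)
        = ∫ σ : s, (fderiv ℝ F (v, ↑w' + σ) (v₀, b) +
            fderiv ℝ F (v, ↑w' + σ) ((0 : V), c - b)) := by
          congr 1; funext σ; exact hsplit σ
      _ = (∫ σ : s, fderiv ℝ F (v, ↑w' + σ) (v₀, b)) +
            ∫ σ : s, fderiv ℝ F (v, ↑w' + σ) ((0 : V), c - b) :=
          integral_add hint1 hint2
      _ = ∫ σ : s, fderiv ℝ F (v, ↑w' + σ) (v₀, b) := by rw [hzero, add_zero]
  · -- part (2)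
    intro w₀ p
    obtain ⟨v, w'⟩ := p
    have hrhs : centDeriv w₀ (radonS s (⇑F)) (v, w') =
        ∫ σ : s, fderiv ℝ F (v, ↑w' + σ) ((0 : V), (↑w₀ : W)) := by
      have h := (key s F v 0 (↑w') (↑w₀ : W)).2
      have heq : (fun τ : ℝ => ∫ σ : s, F (v + τ • (0 : V), (↑w' : W) + τ • (↑w₀ : W) + σ)) =
          fun τ : ℝ => radonS s (⇑F) ((v, w').1, (v, w').2 + τ • w₀) := by
        funext τ
        congr 1
        funext σ
        simp [radonS, Submodule.coe_add, Submodule.coe_smul]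
      rw [heq] at h
      rw [centDeriv]
      exact h.deriv
    rw [hrhs]
    simp only [radonS]
    congr 1
    funext σ
    rw [centDeriv_eq]
  · -- part (3)
    intro w₀ hw₀ p
    obtain ⟨v, w'⟩ := p
    have : radonS s (centDeriv w₀ (⇑F)) (v, w') =
        ∫ σ : s, fderiv ℝ F (v, ↑w' + σ) ((0 : V), w₀) := by
      simp only [radonS]
      congr 1
      funext σ
      rw [centDeriv_eq]
    rw [this]
    exact int_deriv_zero s F v (↑w') w₀ hw₀
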